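/- Let f: ℝⁿ → ℝ be twice continuously differentiable with γ-Lipschitz Hessian, H a symmetric positive semidefinite n×n matrix with 0 ⪯ H − ∇²f(x_t), and η ≥ 0. Let x_{t+1} minimize x ↦ f(x_t) + ⟨∇f(x_t), x−x_t⟩ + (1/2)⟨H(x−x_t), x−x_t⟩ + (η/6)‖x−x_t‖³. Then for every x ∈ ℝⁿ: f(x_{t+1}) ≤ f(x) + (1/2)⟨(H−∇²f(x_t))(x−x_t), x−x_t⟩ − (η/12)‖x−x_{t+1}‖³ + ((γ+η)/6)‖x−x_t‖³ + ((γ−η)/6)‖x_{t+1}−x_t‖³ − (1/2)⟨H(x−x_{t+1}), x−x_{t+1}⟩ + (1/2)⟨(H−∇²f(x_t))(x_{t+1}−x_t), x_{t+1}−x_t⟩. -/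

import Mathlib

open scoped RealInnerProductSpace

lemma cube_scalar (a b u : ℝ) (ha : 0 ≤ a) (hb : 0 ≤ b) (hu : 0 ≤ u) (htri : b ≤ u + a) :
    0 ≤ 2*u^3 - 3*a*u^2 + a^3 + 3*a*b^2 - b^3 := by
  rcases le_or_gt b (3*a) with h | h
  · nlinarith [mul_nonneg (sq_nonneg (u-a)) (by linarith : (0:ℝ) ≤ 2*u+a),
      mul_nonneg (mul_nonneg hb hb) (by linarith : (0:ℝ) ≤ 3*a - b)]
  · have hc : b - a ≤ u := by linarith
    have h2 : 2*a ≤ b - a := by linarith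
    nlinarith [mul_nonneg (by linarith : (0:ℝ) ≤ u - (b-a))
        (by nlinarith : (0:ℝ) ≤ 2*u^2+2*u*(b-a)+2*(b-a)^2-3*a*u-3*a*(b-a)),
      mul_nonneg (by linarith : (0:ℝ) ≤ b - 3*a)
        (by nlinarith [sq_nonneg (b - 3*a/2)] : (0:ℝ) ≤ b^2-3*a*b+3*a^2)]

lemma cube_vec {E : Type*} [NormedAddCommGroup E] [InnerProductSpace ℝ E] (s d : E) :
    ‖s‖^3 + 3*‖s‖*⟪s,d⟫ + 1/2*‖d‖^3 ≤ ‖s+d‖^3 := by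
  have hsq : ‖s+d‖^2 = ‖s‖^2 + 2*⟪s,d⟫ + ‖d‖^2 := by
    exact norm_add_sq_real s d
  have key := cube_scalar ‖s‖ ‖d‖ ‖s+d‖ (norm_nonneg s) (norm_nonneg d) (norm_nonneg _)
    (by simpa using norm_sub_le (s+d) s)
  have h3 : ‖s‖ * ‖s+d‖^2 = ‖s‖ * (‖s‖^2 + 2*⟪s,d⟫ + ‖d‖^2) := by rw [hsq]
  nlinarith [key, h3]

lemma hasGradientAt_norm_cube {E : Type*} [NormedAddCommGroup E] [InnerProductSpace ℝ E]
    [CompleteSpace E] (c x : E) :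
    HasGradientAt (fun y => ‖y - c‖ ^ 3) ((3 * ‖x - c‖) • (x - c)) x := by
  rw [hasGradientAt_iff_hasFDerivAt]
  rcases eq_or_ne x c with rfl | hx
  · simp only [sub_self, norm_zero, mul_zero, zero_smul, map_zero]
    rw [hasFDerivAt_iff_isLittleO_nhds_zero]
    have : (fun h : E => ‖h‖ ^ 3) =o[nhds 0] fun h => h :=
      Asymptotics.isLittleO_norm_pow_id (by norm_num)
    refine this.congr' ?_ (by rfl)
    filter_upwards with h
    simp
  · have hne : x - c ≠ 0 := sub_ne_zero.mpr hx
    have ht : (0:ℝ) < ⟪x - c, x - c⟫ := by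
      rw [real_inner_self_eq_norm_sq]
      exact pow_pos (norm_pos_iff.mpr hne) 2
    have h1 : HasFDerivAt (fun y : E => y - c) (ContinuousLinearMap.id ℝ E) x :=
      (hasFDerivAt_id x).sub_const c
    have hq : HasFDerivAt (fun y : E => ⟪y - c, y - c⟫)
        ((fderivInnerCLM ℝ (x - c, x - c)).comp
          ((ContinuousLinearMap.id ℝ E).prod (ContinuousLinearMap.id ℝ E))) x :=
      h1.inner ℝ h1
    have hg : HasDerivAt (fun t : ℝ => t * Real.sqrt t)
        ((3/2) * Real.sqrt ⟪x - c, x - c⟫) ⟪x - c, x - c⟫ := by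
      have h := (hasDerivAt_id ⟪x - c, x - c⟫).mul (Real.hasDerivAt_sqrt ht.ne')
      refine h.congr_deriv ?_
      have hmul : Real.sqrt ⟪x - c, x - c⟫ * Real.sqrt ⟪x - c, x - c⟫ = ⟪x - c, x - c⟫ :=
        Real.mul_self_sqrt ht.le
      have hs : Real.sqrt ⟪x - c, x - c⟫ ≠ 0 := by positivity
      field_simp
      nlinarith [hmul, id_eq ⟪x - c, x - c⟫]
    have hcomp := hg.comp_hasFDerivAt x hq
    have hfun : ((fun t : ℝ => t * Real.sqrt t) ∘ fun y : E => ⟪y - c, y - c⟫)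
        = fun y => ‖y - c‖ ^ 3 := by
      funext y
      show ⟪y - c, y - c⟫ * Real.sqrt ⟪y - c, y - c⟫ = _
      rw [real_inner_self_eq_norm_sq, Real.sqrt_sq (norm_nonneg _)]
      ring
    rw [hfun] at hcomp
    refine hcomp.congr_fderiv ?_
    symm
    ext v
    simp only [ContinuousLinearMap.coe_smul', Pi.smul_apply, ContinuousLinearMap.coe_comp',
      Function.comp_apply, ContinuousLinearMap.prod_apply, ContinuousLinearMap.coe_id', id_eq,
      fderivInnerCLM_apply, InnerProductSpace.toDual_apply_apply, smul_eq_mul]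
    rw [real_inner_smul_left, real_inner_self_eq_norm_sq, Real.sqrt_sq (norm_nonneg _),
      real_inner_comm v (x - c)]
    ring

lemma taylor_bound {E : Type*} [NormedAddCommGroup E] [InnerProductSpace ℝ E] [CompleteSpace E]
    (f : E → ℝ) (f' : E → E) (f'' : E → E →L[ℝ] E) (γ : ℝ)
    (hgrad : ∀ x, HasGradientAt f (f' x) x)
    (hhess : ∀ x, HasFDerivAt f' (f'' x) x)
    (hlip : ∀ x y, ‖f'' x - f'' y‖ ≤ γ * ‖x - y‖) (x y : E) :
    |f y - f x - ⟪y - x, f' x⟫ - 1/2 * ⟪y - x, f'' x (y - x)⟫| ≤ γ/6 * ‖y - x‖^3 := by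
  set v := y - x with hv
  have hpd : ∀ t : ℝ, HasDerivAt (fun t : ℝ => x + t • v) v t := fun t => by
    simpa using ((hasDerivAt_id t).smul_const v).const_add x
  have hg0 : ∀ t : ℝ, HasDerivAt (fun t : ℝ => f (x + t • v)) ⟪v, f' (x + t • v)⟫ t := by
    intro t
    have h := ((hgrad (x + t • v)).hasFDerivAt).comp_hasDerivAt t (hpd t)
    simpa [InnerProductSpace.toDual_apply_apply, real_inner_comm, Function.comp_def] using h
  have hg1 : ∀ t : ℝ, HasDerivAt (fun t : ℝ => ⟪v, f' (x + t • v)⟫)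
      ⟪v, f'' (x + t • v) v⟫ t := by
    intro t
    have hd := (hhess (x + t • v)).comp_hasDerivAt t (hpd t)
    have h := ((innerSL ℝ v).hasFDerivAt).comp_hasDerivAt t hd
    simpa [Function.comp_def] using h
  have hK : ∀ t ∈ Set.Ico (0:ℝ) 1,
      |⟪v, f'' (x + t • v) v⟫ - ⟪v, f'' x v⟫| ≤ (γ * ‖v‖^3) * t := by
    intro t ht
    have h1 : ⟪v, f'' (x + t • v) v⟫ - ⟪v, f'' x v⟫ = ⟪v, (f'' (x + t • v) - f'' x) v⟫ := by
      simp [inner_sub_right]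
    rw [h1]
    have h2 : |⟪v, (f'' (x + t • v) - f'' x) v⟫| ≤ ‖v‖ * ‖(f'' (x + t • v) - f'' x) v‖ :=
      abs_real_inner_le_norm _ _
    have h3 : ‖(f'' (x + t • v) - f'' x) v‖ ≤ ‖f'' (x + t • v) - f'' x‖ * ‖v‖ :=
      ContinuousLinearMap.le_opNorm _ _
    have h4 : ‖f'' (x + t • v) - f'' x‖ ≤ γ * (t * ‖v‖) := by
      have := hlip (x + t • v) x
      simpa [norm_smul, abs_of_nonneg ht.1] using this
    have hγ' : 0 ≤ γ * (t * ‖v‖) := le_trans (norm_nonneg _) h4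
    calc |⟪v, (f'' (x + t • v) - f'' x) v⟫| ≤ ‖v‖ * (‖f'' (x + t • v) - f'' x‖ * ‖v‖) :=
          h2.trans (by gcongr)
      _ ≤ ‖v‖ * ((γ * (t * ‖v‖)) * ‖v‖) := by gcongr
      _ = (γ * ‖v‖^3) * t := by ring
  -- Step A
  have hh1 : ∀ t : ℝ, HasDerivAt
      (fun t : ℝ => ⟪v, f' (x + t • v)⟫ - ⟪v, f' x⟫ - t * ⟪v, f'' x v⟫)
      (⟪v, f'' (x + t • v) v⟫ - ⟪v, f'' x v⟫) t := fun t =>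
    ((hg1 t).sub_const _).sub (hasDerivAt_mul_const _)
  have hA : ∀ t ∈ Set.Icc (0:ℝ) 1,
      ‖⟪v, f' (x + t • v)⟫ - ⟪v, f' x⟫ - t * ⟪v, f'' x v⟫‖ ≤ (γ * ‖v‖^3) * t^2 / 2 := by
    intro t ht
    refine image_norm_le_of_norm_deriv_right_le_deriv_boundary
      (f := fun t => ⟪v, f' (x + t • v)⟫ - ⟪v, f' x⟫ - t * ⟪v, f'' x v⟫)
      (f' := fun t => ⟪v, f'' (x + t • v) v⟫ - ⟪v, f'' x v⟫)
      (B := fun t => (γ * ‖v‖^3) * t^2 / 2)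
      (B' := fun t => (γ * ‖v‖^3) * t) ?_ ?_ ?_ ?_ ?_ ht
    · exact (continuous_iff_continuousAt.mpr fun t => (hh1 t).continuousAt).continuousOn
    · exact fun t _ => (hh1 t).hasDerivWithinAt
    · simp
    · intro t
      have h := ((hasDerivAt_pow 2 t).const_mul (γ * ‖v‖^3)).div_const 2
      refine h.congr_deriv ?_; ring
    · intro t ht
      rw [Real.norm_eq_abs]
      exact hK t ht
  -- Step B
  have hh0 : ∀ t : ℝ, HasDerivAt
      (fun t : ℝ => f (x + t • v) - f x - t * ⟪v, f' x⟫ - t^2/2 * ⟪v, f'' x v⟫)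
      (⟪v, f' (x + t • v)⟫ - ⟪v, f' x⟫ - t * ⟪v, f'' x v⟫) t := by
    intro t
    have h2t : HasDerivAt (fun t : ℝ => t^2/2 * ⟪v, f'' x v⟫) (t * ⟪v, f'' x v⟫) t := by
      have h := ((hasDerivAt_pow 2 t).div_const 2).mul_const ⟪v, f'' x v⟫
      refine h.congr_deriv ?_; ring
    exact (((hg0 t).sub_const _).sub (hasDerivAt_mul_const _)).sub h2t
  have hB : ∀ t ∈ Set.Icc (0:ℝ) 1,
      ‖f (x + t • v) - f x - t * ⟪v, f' x⟫ - t^2/2 * ⟪v, f'' x v⟫‖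
        ≤ (γ * ‖v‖^3) * t^3 / 6 := by
    intro t ht
    refine image_norm_le_of_norm_deriv_right_le_deriv_boundary
      (f := fun t => f (x + t • v) - f x - t * ⟪v, f' x⟫ - t^2/2 * ⟪v, f'' x v⟫)
      (f' := fun t => ⟪v, f' (x + t • v)⟫ - ⟪v, f' x⟫ - t * ⟪v, f'' x v⟫)
      (B := fun t => (γ * ‖v‖^3) * t^3 / 6)
      (B' := fun t => (γ * ‖v‖^3) * t^2 / 2) ?_ ?_ ?_ ?_ ?_ ht
    · exact (continuous_iff_continuousAt.mpr fun t => (hh0 t).continuousAt).continuousOn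
    · exact fun t _ => (hh0 t).hasDerivWithinAt
    · simp
    · intro t
      have h := (((hasDerivAt_pow 3 t).const_mul (γ * ‖v‖^3)).div_const 6)
      refine h.congr_deriv ?_; ring
    · intro t ht
      exact hA t (Set.mem_Icc_of_Ico ht)
  have hfin := hB 1 (by norm_num)
  have hy : x + (1:ℝ) • v = y := by rw [hv]; simp
  rw [hy] at hfin
  rw [Real.norm_eq_abs] at hfin
  calc |f y - f x - ⟪v, f' x⟫ - 1/2 * ⟪v, f'' x v⟫|
      = |f y - f x - 1 * ⟪v, f' x⟫ - 1^2/2 * ⟪v, f'' x v⟫| := by norm_num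
    _ ≤ (γ * ‖v‖^3) * 1^3 / 6 := hfin
    _ = γ/6 * ‖v‖^3 := by ring

/-- Key recursion (Lemma 1 of the paper) for the inexact cubic-regularized Newton step. -/
theorem stmt_8 (n : ℕ) (f : EuclideanSpace ℝ (Fin n) → ℝ)
    (f' : EuclideanSpace ℝ (Fin n) → EuclideanSpace ℝ (Fin n))
    (f'' : EuclideanSpace ℝ (Fin n) → EuclideanSpace ℝ (Fin n) →L[ℝ] EuclideanSpace ℝ (Fin n))
    (γ η : ℝ) (hγ : 0 ≤ γ) (hη : 0 ≤ η)
    (hgrad : ∀ x, HasGradientAt f (f' x) x)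
    (hhess : ∀ x, HasFDerivAt f' (f'' x) x)
    (hcont : Continuous f'')
    (hlip : ∀ x y, ‖f'' x - f'' y‖ ≤ γ * ‖x - y‖)
    (H : EuclideanSpace ℝ (Fin n) →L[ℝ] EuclideanSpace ℝ (Fin n))
    (hHsymm : ∀ u v, ⟪H u, v⟫ = ⟪u, H v⟫)
    (xt : EuclideanSpace ℝ (Fin n))
    (hHpsd : ∀ v, 0 ≤ ⟪H v - f'' xt v, v⟫)
    (xnext : EuclideanSpace ℝ (Fin n))
    (hmin : ∀ x, f xt + ⟪f' xt, xnext - xt⟫ + 1 / 2 * ⟪H (xnext - xt), xnext - xt⟫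
        + η / 6 * ‖xnext - xt‖ ^ 3
      ≤ f xt + ⟪f' xt, x - xt⟫ + 1 / 2 * ⟪H (x - xt), x - xt⟫ + η / 6 * ‖x - xt‖ ^ 3) :
    ∀ x, f xnext ≤ f x + 1 / 2 * ⟪(H - f'' xt) (x - xt), x - xt⟫
      - η / 12 * ‖x - xnext‖ ^ 3 + (γ + η) / 6 * ‖x - xt‖ ^ 3
      + (γ - η) / 6 * ‖xnext - xt‖ ^ 3
      - 1 / 2 * ⟪H (x - xnext), x - xnext⟫
      + 1 / 2 * ⟪(H - f'' xt) (xnext - xt), xnext - xt⟫ := by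
  have h1 : HasFDerivAt (fun x : EuclideanSpace ℝ (Fin n) => x - xt)
      (ContinuousLinearMap.id ℝ _) xnext := (hasFDerivAt_id xnext).sub_const xt
  have hA1 : HasFDerivAt (fun x : EuclideanSpace ℝ (Fin n) => ⟪f' xt, x - xt⟫)
      ((innerSL ℝ (f' xt)).comp (ContinuousLinearMap.id ℝ _)) xnext :=
    ((innerSL ℝ (f' xt)).hasFDerivAt).comp xnext h1
  have hHx : HasFDerivAt (fun x : EuclideanSpace ℝ (Fin n) => H (x - xt))
      (H.comp (ContinuousLinearMap.id ℝ _)) xnext := H.hasFDerivAt.comp xnext h1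
  have hA2 := hHx.inner ℝ h1
  have hA3 := (hasGradientAt_norm_cube xt xnext).hasFDerivAt
  have hm := (((hA1.const_add (f xt)).add (hA2.const_mul (1/2))).add (hA3.const_mul (η/6)))
  have hloc : IsLocalMin (fun x => f xt + ⟪f' xt, x - xt⟫ + 1 / 2 * ⟪H (x - xt), x - xt⟫
      + η / 6 * ‖x - xt‖ ^ 3) xnext := Filter.Eventually.of_forall hmin
  have hz := hloc.hasFDerivAt_eq_zero hm
  have hstat : ∀ w, ⟪f' xt, w⟫ + ⟪H (xnext - xt), w⟫
      + η/2 * (‖xnext - xt‖ * ⟪xnext - xt, w⟫) = 0 := by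
    intro w
    have hzw := ContinuousLinearMap.ext_iff.mp hz w
    simp only [ContinuousLinearMap.add_apply, ContinuousLinearMap.coe_smul', Pi.smul_apply,
      ContinuousLinearMap.coe_comp', Function.comp_apply, ContinuousLinearMap.coe_id', id_eq,
      innerSL_apply_apply, fderivInnerCLM_apply, ContinuousLinearMap.prod_apply,
      InnerProductSpace.toDual_apply_apply, ContinuousLinearMap.zero_apply, smul_eq_mul] at hzw
    have hsy : ⟪H w, xnext - xt⟫ = ⟪H (xnext - xt), w⟫ := by
      rw [hHsymm w (xnext - xt), real_inner_comm]
    rw [real_inner_smul_left] at hzw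
    linarith [hzw, hsy]
  intro x
  have T1 := (abs_le.mp (taylor_bound f f' f'' γ hgrad hhess hlip xt xnext)).2
  have T2 := (abs_le.mp (taylor_bound f f' f'' γ hgrad hhess hlip xt x)).1
  have C := cube_vec (xnext - xt) (x - xnext)
  have S := hstat (x - xnext)
  have hP := hHpsd (xnext - xt)
  rw [inner_sub_left] at hP
  set s := xnext - xt with hs
  set d := x - xnext with hd
  set w := x - xt with hww
  have hsd : s + d = w := by rw [hs, hd, hww]; abel
  rw [hsd] at C
  have C' : η/6 * (‖s‖^3 + 3*‖s‖*⟪s,d⟫ + 1/2*‖d‖^3) ≤ η/6 * ‖w‖^3 :=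
    mul_le_mul_of_nonneg_left C (by positivity)
  have hsy2 : ⟪H d, s⟫ = ⟪H s, d⟫ := by rw [hHsymm d s, real_inner_comm]
  have E1 : ⟪H w, w⟫ = ⟪H s, s⟫ + 2*⟪H s, d⟫ + ⟪H d, d⟫ := by
    rw [← hsd, map_add, inner_add_left, inner_add_right, inner_add_right]
    linarith [hsy2]
  have E2 : ⟪f' xt, w⟫ = ⟪f' xt, s⟫ + ⟪f' xt, d⟫ := by rw [← hsd, inner_add_right]
  have E3 : ⟪(H - f'' xt) w, w⟫ = ⟪H w, w⟫ - ⟪f'' xt w, w⟫ := by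
    rw [ContinuousLinearMap.sub_apply, inner_sub_left]
  have E4 : ⟪(H - f'' xt) s, s⟫ = ⟪H s, s⟫ - ⟪f'' xt s, s⟫ := by
    rw [ContinuousLinearMap.sub_apply, inner_sub_left]
  have e1 : ⟪s, f' xt⟫ = ⟪f' xt, s⟫ := real_inner_comm _ _
  have e2 : ⟪s, f'' xt s⟫ = ⟪f'' xt s, s⟫ := real_inner_comm _ _
  have e3 : ⟪w, f' xt⟫ = ⟪f' xt, w⟫ := real_inner_comm _ _
  have e4 : ⟪w, f'' xt w⟫ = ⟪f'' xt w, w⟫ := real_inner_comm _ _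
  rw [e1, e2] at T1
  rw [e3, e4] at T2
  rw [E3, E4]
  linarith [T1, T2, hP, C', S, E1, E2]
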